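/- Let g : ℝ → ℝ be a convex function. Then the lower and upper average speeds v_-(g) and v_+(g) are unchanged by horizontal translation by an integer distance and by arbitrary vertical translation: for every integer k and every real γ, v_-(x ↦ g(x − k) + γ) = v_-(g) and v_+(x ↦ g(x − k) + γ) = v_+(g). -/

import Mathlib

/-- One grid peeling step: remove the extreme points of the convex hull. -/
noncomputable def peel (U : Set (ℝ × ℝ)) : Set (ℝ × ℝ) :=
  U \ Set.extremePoints ℝ (convexHull ℝ U)

/-- The lattice points on or above the graph of `g`. -/
def Ugrid (g : ℝ → ℝ) : Set (ℝ × ℝ) :=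
  {p | (∃ i j : ℤ, p = ((i : ℝ), (j : ℝ))) ∧ g p.1 ≤ p.2}

/-- Lower average speed of the grid peeling process started on `{(x,y) ∈ ℤ² : y ≥ g x}`. -/
noncomputable def vLower (g : ℝ → ℝ) : ℝ :=
  Filter.liminf (fun m : ℕ =>
    sSup {γ : ℝ | peel^[m] (Ugrid g) ⊆ Ugrid (fun x => g x + γ)} / m) Filter.atTop

/-- Upper average speed of the grid peeling process started on `{(x,y) ∈ ℤ² : y ≥ g x}`. -/
noncomputable def vUpper (g : ℝ → ℝ) : ℝ :=
  Filter.limsup (fun m : ℕ =>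
    sInf {γ : ℝ | Ugrid (fun x => g x + γ) ⊆ peel^[m] (Ugrid g)} / m) Filter.atTop

/-! ### Auxiliary lemmas -/

open Set Filter Pointwise

noncomputable def Sset (g : ℝ → ℝ) (m : ℕ) : Set ℝ :=
  {γ : ℝ | peel^[m] (Ugrid g) ⊆ Ugrid (fun x => g x + γ)}

noncomputable def Tset (g : ℝ → ℝ) (m : ℕ) : Set ℝ :=
  {γ : ℝ | Ugrid (fun x => g x + γ) ⊆ peel^[m] (Ugrid g)}

lemma peel_mono {U V : Set (ℝ × ℝ)} (h : U ⊆ V) : peel U ⊆ peel V := by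
  intro p hp
  obtain ⟨hpU, hpe⟩ := hp
  refine ⟨h hpU, fun hext => hpe ?_⟩
  refine ⟨subset_convexHull ℝ U hpU, ?_⟩
  intro x₁ h₁ x₂ h₂ hseg
  exact hext.2 (convexHull_mono h h₁) (convexHull_mono h h₂) hseg

lemma peel_iterate_mono (m : ℕ) {U V : Set (ℝ × ℝ)} (h : U ⊆ V) :
    peel^[m] U ⊆ peel^[m] V := by
  induction m generalizing U V with
  | zero => simpa using h
  | succ n ih =>
    rw [Function.iterate_succ_apply, Function.iterate_succ_apply]
    exact ih (peel_mono h)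

lemma peel_subset (U : Set (ℝ × ℝ)) : peel U ⊆ U := Set.diff_subset

lemma peel_iterate_subset (m : ℕ) (U : Set (ℝ × ℝ)) : peel^[m] U ⊆ U := by
  induction m with
  | zero => simp
  | succ n ih =>
    rw [Function.iterate_succ_apply]
    exact (peel_iterate_mono n (peel_subset U)).trans ih

lemma extremePoints_translate (v : ℝ × ℝ) (s : Set (ℝ × ℝ)) :
    Set.extremePoints ℝ ((fun p => v + p) '' s) = (fun p => v + p) '' Set.extremePoints ℝ s := by
  apply Set.Subset.antisymm
  · intro p hp
    obtain ⟨q, hq, rfl⟩ := hp.1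
    refine ⟨q, ⟨hq, ?_⟩, rfl⟩
    intro x₁ h₁ x₂ h₂ hseg
    have hseg' : v + q ∈ openSegment ℝ (v + x₁) (v + x₂) :=
      (mem_openSegment_translate ℝ v).mpr hseg
    have h := hp.2 (Set.mem_image_of_mem _ h₁) (Set.mem_image_of_mem _ h₂) hseg'
    exact add_left_cancel h
  · rintro _ ⟨q, hq, rfl⟩
    refine ⟨Set.mem_image_of_mem _ hq.1, ?_⟩
    intro y₁ hy₁ y₂ hy₂ hseg
    obtain ⟨x₁, h₁, rfl⟩ := hy₁
    obtain ⟨x₂, h₂, rfl⟩ := hy₂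
    have hseg' : q ∈ openSegment ℝ x₁ x₂ := (mem_openSegment_translate ℝ v).mp hseg
    have h := hq.2 h₁ h₂ hseg'
    exact by rw [show x₁ = q from h]

lemma convexHull_translate (v : ℝ × ℝ) (s : Set (ℝ × ℝ)) :
    convexHull ℝ ((fun p => v + p) '' s) = (fun p => v + p) '' convexHull ℝ s := by
  have h : ∀ t : Set (ℝ × ℝ), (fun p => v + p) '' t = v +ᵥ t := fun t => by
    rw [← Set.image_vadd]; rfl
  rw [h, h, convexHull_vadd]

lemma peel_translate (v : ℝ × ℝ) (U : Set (ℝ × ℝ)) :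
    peel ((fun p => v + p) '' U) = (fun p => v + p) '' peel U := by
  unfold peel
  rw [convexHull_translate, extremePoints_translate,
    ← Set.image_diff (add_right_injective v)]

lemma peel_iterate_translate (m : ℕ) (v : ℝ × ℝ) (U : Set (ℝ × ℝ)) :
    peel^[m] ((fun p => v + p) '' U) = (fun p => v + p) '' peel^[m] U := by
  induction m with
  | zero => simp
  | succ n ih =>
    rw [Function.iterate_succ_apply', Function.iterate_succ_apply', ih, peel_translate]

lemma Ugrid_antitone {g h : ℝ → ℝ} (hle : ∀ x, g x ≤ h x) : Ugrid h ⊆ Ugrid g :=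
  fun p hp => ⟨hp.1, (hle p.1).trans hp.2⟩

lemma Ugrid_congr {g h : ℝ → ℝ} (he : ∀ x, g x = h x) : Ugrid g = Ugrid h := by
  have : g = h := funext he
  rw [this]

lemma Ugrid_translate (g : ℝ → ℝ) (k c : ℤ) :
    (fun p : ℝ × ℝ => ((k : ℝ), (c : ℝ)) + p) '' Ugrid g
      = Ugrid (fun x => g (x - k) + c) := by
  ext p
  simp only [Set.mem_image, Ugrid, Set.mem_setOf_eq]
  constructor
  · rintro ⟨q, ⟨⟨i, j, rfl⟩, hq⟩, rfl⟩
    have hq' : g (i : ℝ) ≤ (j : ℝ) := hq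
    refine ⟨⟨k + i, c + j, by push_cast; rfl⟩, ?_⟩
    show g ((k : ℝ) + (i : ℝ) - (k : ℝ)) + (c : ℝ) ≤ (c : ℝ) + (j : ℝ)
    have h2 : (k : ℝ) + (i : ℝ) - (k : ℝ) = (i : ℝ) := by ring
    rw [h2]
    linarith
  · rintro ⟨⟨i, j, rfl⟩, hp⟩
    have hp' : g ((i : ℝ) - (k : ℝ)) + (c : ℝ) ≤ (j : ℝ) := hp
    refine ⟨((i : ℝ) - k, (j : ℝ) - c), ⟨⟨i - k, j - c, by push_cast; rfl⟩, ?_⟩, ?_⟩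
    · show g ((i : ℝ) - (k : ℝ)) ≤ (j : ℝ) - (c : ℝ)
      linarith
    · show ((k : ℝ) + ((i : ℝ) - (k : ℝ)), (c : ℝ) + ((j : ℝ) - (c : ℝ))) = ((i : ℝ), (j : ℝ))
      simp only [Prod.mk.injEq]
      constructor <;> ring

lemma Sset_translate (g : ℝ → ℝ) (k c : ℤ) (m : ℕ) :
    Sset (fun x => g (x - k) + c) m = Sset g m := by
  ext δ
  simp only [Sset, Set.mem_setOf_eq]
  have h1 : Ugrid (fun x => g (x - k) + c)
      = (fun p : ℝ × ℝ => ((k : ℝ), (c : ℝ)) + p) '' Ugrid g := (Ugrid_translate g k c).symm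
  have h2 : Ugrid (fun x => (g (x - k) + c) + δ)
      = (fun p : ℝ × ℝ => ((k : ℝ), (c : ℝ)) + p) '' Ugrid (fun x => g x + δ) := by
    rw [Ugrid_translate (fun x => g x + δ) k c]
    exact Ugrid_congr fun x => by ring
  rw [h1, h2, peel_iterate_translate]
  exact Set.image_subset_image_iff (add_right_injective _)

lemma Tset_translate (g : ℝ → ℝ) (k c : ℤ) (m : ℕ) :
    Tset (fun x => g (x - k) + c) m = Tset g m := by
  ext δ
  simp only [Tset, Set.mem_setOf_eq]
  have h1 : Ugrid (fun x => g (x - k) + c)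
      = (fun p : ℝ × ℝ => ((k : ℝ), (c : ℝ)) + p) '' Ugrid g := (Ugrid_translate g k c).symm
  have h2 : Ugrid (fun x => (g (x - k) + c) + δ)
      = (fun p : ℝ × ℝ => ((k : ℝ), (c : ℝ)) + p) '' Ugrid (fun x => g x + δ) := by
    rw [Ugrid_translate (fun x => g x + δ) k c]
    exact Ugrid_congr fun x => by ring
  rw [h1, h2, peel_iterate_translate]
  exact Set.image_subset_image_iff (add_right_injective _)

/-! ### Real sSup/sInf comparison lemmas -/

lemma abs_sSup_sub_sSup_le {A B : Set ℝ} (hAB : ∀ a ∈ A, a - 1 ∈ B) (hBA : ∀ b ∈ B, b - 1 ∈ A) :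
    |sSup A - sSup B| ≤ 1 := by
  rcases Set.eq_empty_or_nonempty A with hA | hA
  · have hB : B = ∅ := by
      rw [Set.eq_empty_iff_forall_notMem]
      intro b hb
      have := hBA b hb
      rw [hA] at this
      exact this
    simp [hA, hB]
  · have hB : B.Nonempty := ⟨hA.choose - 1, hAB _ hA.choose_spec⟩
    by_cases hbd : BddAbove A
    · have hbdB : BddAbove B := by
        obtain ⟨M, hM⟩ := hbd
        exact ⟨M + 1, fun b hb => by have := hM (hBA b hb); linarith⟩
      rw [abs_sub_le_iff]
      constructor
      · have h1 : sSup A ≤ sSup B + 1 :=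
          csSup_le hA fun a ha => by have := le_csSup hbdB (hAB a ha); linarith
        linarith
      · have h1 : sSup B ≤ sSup A + 1 :=
          csSup_le hB fun b hb => by have := le_csSup hbd (hBA b hb); linarith
        linarith
    · have hbdB : ¬ BddAbove B := by
        rintro ⟨M, hM⟩
        exact hbd ⟨M + 1, fun a ha => by have := hM (hAB a ha); linarith⟩
      rw [Real.sSup_of_not_bddAbove hbd, Real.sSup_of_not_bddAbove hbdB]
      simp

lemma abs_sInf_sub_sInf_le {A B : Set ℝ} (hAB : ∀ a ∈ A, a + 1 ∈ B) (hBA : ∀ b ∈ B, b + 1 ∈ A) :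
    |sInf A - sInf B| ≤ 1 := by
  rcases Set.eq_empty_or_nonempty A with hA | hA
  · have hB : B = ∅ := by
      rw [Set.eq_empty_iff_forall_notMem]
      intro b hb
      have := hBA b hb
      rw [hA] at this
      exact this
    simp [hA, hB]
  · have hB : B.Nonempty := ⟨hA.choose + 1, hAB _ hA.choose_spec⟩
    by_cases hbd : BddBelow A
    · have hbdB : BddBelow B := by
        obtain ⟨M, hM⟩ := hbd
        exact ⟨M - 1, fun b hb => by have := hM (hBA b hb); linarith⟩
      rw [abs_sub_le_iff]
      constructor
      · have h1 : sInf A - 1 ≤ sInf B :=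
          le_csInf hB fun b hb => by have := csInf_le hbd (hBA b hb); linarith
        linarith
      · have h1 : sInf B - 1 ≤ sInf A :=
          le_csInf hA fun a ha => by have := csInf_le hbdB (hAB a ha); linarith
        linarith
    · have hbdB : ¬ BddBelow B := by
        rintro ⟨M, hM⟩
        exact hbd ⟨M - 1, fun a ha => by have := hM (hAB a ha); linarith⟩
      rw [Real.sInf_of_not_bddBelow hbd, Real.sInf_of_not_bddBelow hbdB]
      simp

lemma sSup_eq_of_eps {A B : Set ℝ} (hAB : ∀ a ∈ A, ∀ ε > (0:ℝ), a - ε ∈ B)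
    (hBA : ∀ b ∈ B, ∀ ε > (0:ℝ), b - ε ∈ A) : sSup A = sSup B := by
  rcases Set.eq_empty_or_nonempty A with hA | hA
  · have hB : B = ∅ := by
      rw [Set.eq_empty_iff_forall_notMem]
      intro b hb
      have := hBA b hb 1 one_pos
      rw [hA] at this
      exact this
    rw [hA, hB]
  · have hB : B.Nonempty := ⟨hA.choose - 1, hAB _ hA.choose_spec 1 one_pos⟩
    by_cases hbd : BddAbove A
    · have hbdB : BddAbove B := by
        obtain ⟨M, hM⟩ := hbd
        refine ⟨M + 1, fun b hb => ?_⟩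
        have := hM (hBA b hb 1 one_pos)
        linarith
      have key : ∀ (C D : Set ℝ), C.Nonempty → BddAbove D →
          (∀ a ∈ C, ∀ ε > (0:ℝ), a - ε ∈ D) → sSup C ≤ sSup D := by
        intro C D hC hD hCD
        refine csSup_le hC fun a ha => ?_
        by_contra h
        push_neg at h
        have hε : (0:ℝ) < (a - sSup D) / 2 := by linarith
        have := le_csSup hD (hCD a ha _ hε)
        linarith
      exact le_antisymm (key A B hA hbdB hAB) (key B A hB hbd hBA)
    · have hbdB : ¬ BddAbove B := by
        rintro ⟨M, hM⟩
        refine hbd ⟨M + 1, fun a ha => ?_⟩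
        have := hM (hAB a ha 1 one_pos)
        linarith
      rw [Real.sSup_of_not_bddAbove hbd, Real.sSup_of_not_bddAbove hbdB]

lemma sInf_eq_of_eps {A B : Set ℝ} (hAB : ∀ a ∈ A, ∀ ε > (0:ℝ), a + ε ∈ B)
    (hBA : ∀ b ∈ B, ∀ ε > (0:ℝ), b + ε ∈ A) : sInf A = sInf B := by
  rcases Set.eq_empty_or_nonempty A with hA | hA
  · have hB : B = ∅ := by
      rw [Set.eq_empty_iff_forall_notMem]
      intro b hb
      have := hBA b hb 1 one_pos
      rw [hA] at this
      exact this
    rw [hA, hB]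
  · have hB : B.Nonempty := ⟨hA.choose + 1, hAB _ hA.choose_spec 1 one_pos⟩
    by_cases hbd : BddBelow A
    · have hbdB : BddBelow B := by
        obtain ⟨M, hM⟩ := hbd
        refine ⟨M - 1, fun b hb => ?_⟩
        have := hM (hBA b hb 1 one_pos)
        linarith
      have key : ∀ (C D : Set ℝ), C.Nonempty → BddBelow D →
          (∀ a ∈ C, ∀ ε > (0:ℝ), a + ε ∈ D) → sInf D ≤ sInf C := by
        intro C D hC hD hCD
        refine le_csInf hC fun a ha => ?_
        by_contra h
        push_neg at h
        have hε : (0:ℝ) < (sInf D - a) / 2 := by linarith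
        have := csInf_le hD (hCD a ha _ hε)
        linarith
      exact le_antisymm (key B A hB hbd hBA) (key A B hA hbdB hAB)
    · have hbdB : ¬ BddBelow B := by
        rintro ⟨M, hM⟩
        refine hbd ⟨M - 1, fun a ha => ?_⟩
        have := hM (hAB a ha 1 one_pos)
        linarith
      rw [Real.sInf_of_not_bddBelow hbd, Real.sInf_of_not_bddBelow hbdB]

lemma eventually_close_div {u v : ℕ → ℝ} (h : ∀ m, |u m - v m| ≤ 1) {a ε : ℝ} (hε : 0 < ε)
    (ha : ∀ᶠ m : ℕ in Filter.atTop, a ≤ u m / m) :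
    ∀ᶠ m : ℕ in Filter.atTop, a - ε ≤ v m / m := by
  obtain ⟨N, hN⟩ := exists_nat_gt (1 / ε)
  filter_upwards [ha, Filter.eventually_ge_atTop (max N 1)] with m ham hm
  have hm1 : 1 ≤ m := le_of_max_le_right hm
  have hmN : N ≤ m := le_of_max_le_left hm
  have hmpos : (0:ℝ) < m := by exact_mod_cast hm1
  have h1m : 1 / (m:ℝ) ≤ ε := by
    rw [div_le_iff₀ hmpos]
    have h2 : 1 / ε < (m:ℝ) := lt_of_lt_of_le hN (by exact_mod_cast hmN)
    rw [div_lt_iff₀ hε] at h2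
    linarith
  have habs := abs_le.mp (h m)
  have hdiv : (u m - 1) / m ≤ v m / m := by
    gcongr
    linarith [habs.1]
  have heq : (u m - 1) / m = u m / m - 1 / m := by ring
  rw [heq] at hdiv
  linarith

lemma eventually_close_div' {u v : ℕ → ℝ} (h : ∀ m, |u m - v m| ≤ 1) {a ε : ℝ} (hε : 0 < ε)
    (ha : ∀ᶠ m : ℕ in Filter.atTop, u m / m ≤ a) :
    ∀ᶠ m : ℕ in Filter.atTop, v m / m ≤ a + ε := by
  obtain ⟨N, hN⟩ := exists_nat_gt (1 / ε)
  filter_upwards [ha, Filter.eventually_ge_atTop (max N 1)] with m ham hm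
  have hm1 : 1 ≤ m := le_of_max_le_right hm
  have hmN : N ≤ m := le_of_max_le_left hm
  have hmpos : (0:ℝ) < m := by exact_mod_cast hm1
  have h1m : 1 / (m:ℝ) ≤ ε := by
    rw [div_le_iff₀ hmpos]
    have h2 : 1 / ε < (m:ℝ) := lt_of_lt_of_le hN (by exact_mod_cast hmN)
    rw [div_lt_iff₀ hε] at h2
    linarith
  have habs := abs_le.mp (h m)
  have hdiv : v m / m ≤ (u m + 1) / m := by
    gcongr
    linarith [habs.2]
  have heq : (u m + 1) / m = u m / m + 1 / m := by ring
  rw [heq] at hdiv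
  linarith

lemma liminf_div_eq_of_close {u v : ℕ → ℝ} (h : ∀ m, |u m - v m| ≤ 1) :
    Filter.liminf (fun m : ℕ => u m / m) Filter.atTop
      = Filter.liminf (fun m : ℕ => v m / m) Filter.atTop := by
  rw [Filter.liminf_eq, Filter.liminf_eq]
  have h' : ∀ m, |v m - u m| ≤ 1 := fun m => by rw [abs_sub_comm]; exact h m
  exact sSup_eq_of_eps
    (fun a ha ε hε => eventually_close_div h hε ha)
    (fun a ha ε hε => eventually_close_div h' hε ha)

lemma limsup_div_eq_of_close {u v : ℕ → ℝ} (h : ∀ m, |u m - v m| ≤ 1) :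
    Filter.limsup (fun m : ℕ => u m / m) Filter.atTop
      = Filter.limsup (fun m : ℕ => v m / m) Filter.atTop := by
  rw [Filter.limsup_eq, Filter.limsup_eq]
  have h' : ∀ m, |v m - u m| ≤ 1 := fun m => by rw [abs_sub_comm]; exact h m
  exact sInf_eq_of_eps
    (fun a ha ε hε => eventually_close_div' h hε ha)
    (fun a ha ε hε => eventually_close_div' h' hε ha)

/-- The average speeds are invariant under horizontal translation by an integer
distance and arbitrary vertical translation. -/
theorem averageSpeed_invariant (g : ℝ → ℝ) (hg : ConvexOn ℝ Set.univ g)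
    (k : ℤ) (γ : ℝ) :
    vLower (fun x => g (x - k) + γ) = vLower g ∧
    vUpper (fun x => g (x - k) + γ) = vUpper g := by
  obtain ⟨c, hγc, hcγ⟩ : ∃ c : ℤ, γ ≤ (c : ℝ) ∧ (c : ℝ) - 1 ≤ γ := by
    refine ⟨⌈γ⌉, Int.le_ceil γ, ?_⟩
    have := Int.ceil_lt_add_one γ
    linarith
  -- containments between grids of the three comparison functions
  have hUgc : Ugrid (fun x => g (x - k) + (c : ℝ)) ⊆ Ugrid (fun x => g (x - k) + γ) :=
    Ugrid_antitone fun x => by linarith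
  have hUgc1 : Ugrid (fun x => g (x - k) + γ) ⊆ Ugrid (fun x => g (x - k) + ((c - 1 : ℤ) : ℝ)) :=
    Ugrid_antitone fun x => by push_cast; linarith
  -- Sandwich for Sset
  have hS1 : ∀ m : ℕ, ∀ δ ∈ Sset (fun x => g (x - k) + γ) m, δ - 1 ∈ Sset g m := by
    intro m δ hδ
    rw [← Sset_translate g k c]
    show peel^[m] (Ugrid (fun x => g (x - k) + (c : ℝ)))
      ⊆ Ugrid (fun x => (g (x - k) + (c : ℝ)) + (δ - 1))
    refine ((peel_iterate_mono m hUgc).trans hδ).trans (Ugrid_antitone fun x => ?_)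
    show (g (x - k) + (c : ℝ)) + (δ - 1) ≤ (g (x - k) + γ) + δ
    linarith
  have hS2 : ∀ m : ℕ, ∀ δ ∈ Sset g m, δ - 1 ∈ Sset (fun x => g (x - k) + γ) m := by
    intro m δ hδ
    rw [← Sset_translate g k (c - 1)] at hδ
    show peel^[m] (Ugrid (fun x => g (x - k) + γ))
      ⊆ Ugrid (fun x => (g (x - k) + γ) + (δ - 1))
    refine ((peel_iterate_mono m hUgc1).trans hδ).trans (Ugrid_antitone fun x => ?_)
    show (g (x - k) + γ) + (δ - 1) ≤ (g (x - k) + ((c - 1 : ℤ) : ℝ)) + δ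
    push_cast
    linarith
  -- Sandwich for Tset
  have hT1 : ∀ m : ℕ, ∀ δ ∈ Tset (fun x => g (x - k) + γ) m, δ + 1 ∈ Tset g m := by
    intro m δ hδ
    rw [← Tset_translate g k (c - 1)]
    show Ugrid (fun x => (g (x - k) + ((c - 1 : ℤ) : ℝ)) + (δ + 1))
      ⊆ peel^[m] (Ugrid (fun x => g (x - k) + ((c - 1 : ℤ) : ℝ)))
    refine ((Ugrid_antitone fun x => ?_).trans hδ).trans (peel_iterate_mono m hUgc1)
    show (g (x - k) + γ) + δ ≤ (g (x - k) + ((c - 1 : ℤ) : ℝ)) + (δ + 1)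
    push_cast
    linarith
  have hT2 : ∀ m : ℕ, ∀ δ ∈ Tset g m, δ + 1 ∈ Tset (fun x => g (x - k) + γ) m := by
    intro m δ hδ
    rw [← Tset_translate g k c] at hδ
    show Ugrid (fun x => (g (x - k) + γ) + (δ + 1))
      ⊆ peel^[m] (Ugrid (fun x => g (x - k) + γ))
    refine ((Ugrid_antitone fun x => ?_).trans hδ).trans (peel_iterate_mono m hUgc)
    show (g (x - k) + (c : ℝ)) + δ ≤ (g (x - k) + γ) + (δ + 1)
    linarith
  have keyS : ∀ m : ℕ, |sSup (Sset (fun x => g (x - k) + γ) m) - sSup (Sset g m)| ≤ 1 :=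
    fun m => abs_sSup_sub_sSup_le (hS1 m) (hS2 m)
  have keyT : ∀ m : ℕ, |sInf (Tset (fun x => g (x - k) + γ) m) - sInf (Tset g m)| ≤ 1 :=
    fun m => abs_sInf_sub_sInf_le (hT1 m) (hT2 m)
  constructor
  · show Filter.liminf (fun m : ℕ => sSup (Sset (fun x => g (x - k) + γ) m) / m) Filter.atTop
      = Filter.liminf (fun m : ℕ => sSup (Sset g m) / m) Filter.atTop
    exact liminf_div_eq_of_close keyS
  · show Filter.limsup (fun m : ℕ => sInf (Tset (fun x => g (x - k) + γ) m) / m) Filter.atTop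
      = Filter.limsup (fun m : ℕ => sInf (Tset g m) / m) Filter.atTop
    exact limsup_div_eq_of_close keyT
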